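/- In the Lie algebra d_{4,λ} with brackets [e1,e4]=-λe1, [e2,e4]=-(1-λ)e2, [e1,e2]=e3, [e3,e4]=-e3, the adjoint map ad_A of a generic element A = a1e1+a2e2+a3e3+a4e4 is skew-symmetric with respect to the inner product making e1,...,e4 orthonormal if and only if A = 0. Consequently d_{4,λ} admits no Vaisman structure for any λ. -/

import Mathlib

/-- In `d_{4,λ}` with brackets `[e1,e4]=-λe1`, `[e2,e4]=-(1-λ)e2`, `[e1,e2]=e3`,
`[e3,e4]=-e3`, the adjoint map `ad_A` of `A = a1e1 + a2e2 + a3e3 + a4e4` is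
skew-symmetric with respect to the inner product making `e1,…,e4` orthonormal
if and only if `A = 0`. -/
theorem stmt7 (lam : ℝ) (L : Type*) [LieRing L] [LieAlgebra ℝ L]
    (b : Module.Basis (Fin 4) ℝ L)
    (h01 : ⁅b 0, b 1⁆ = b 2) (h02 : ⁅b 0, b 2⁆ = 0)
    (h03 : ⁅b 0, b 3⁆ = -(lam • b 0))
    (h12 : ⁅b 1, b 2⁆ = 0) (h13 : ⁅b 1, b 3⁆ = -((1 - lam) • b 1))
    (h23 : ⁅b 2, b 3⁆ = -(b 2))
    (B : L →ₗ[ℝ] L →ₗ[ℝ] ℝ)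
    (hB : ∀ i j : Fin 4, B (b i) (b j) = if i = j then 1 else 0) :
    ∀ a : Fin 4 → ℝ,
      ((∀ x y : L, B ⁅∑ i, a i • b i, x⁆ y = - B x ⁅∑ i, a i • b i, y⁆) ↔
        (∑ i, a i • b i) = (0 : L)) := by
  intro a
  have hsum : (∑ i, a i • b i) = a 0 • b 0 + a 1 • b 1 + a 2 • b 2 + a 3 • b 3 := by
    simp [Fin.sum_univ_four]
  constructor
  · intro h
    have h10 : ⁅b 1, b 0⁆ = -(b 2) := by rw [← lie_skew, h01]
    have h20 : ⁅b 2, b 0⁆ = 0 := by rw [← lie_skew, h02]; simp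
    have h30 : ⁅b 3, b 0⁆ = lam • b 0 := by rw [← lie_skew, h03]; simp
    have h21 : ⁅b 2, b 1⁆ = 0 := by rw [← lie_skew, h12]; simp
    have h31 : ⁅b 3, b 1⁆ = (1 - lam) • b 1 := by rw [← lie_skew, h13]; simp
    have h32 : ⁅b 3, b 2⁆ = b 2 := by rw [← lie_skew, h23]; simp
    have e22 := h (b 2) (b 2)
    have e02 := h (b 0) (b 2)
    have e12 := h (b 1) (b 2)
    have e32 := h (b 3) (b 2)
    simp only [hsum, add_lie, smul_lie, h01, h02, h03, h12, h13, h23, h10, h20, h30, h21,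
      h31, h32, lie_self, smul_zero, smul_neg, map_add, map_neg, map_smul, map_zero,
      LinearMap.add_apply, LinearMap.neg_apply, LinearMap.smul_apply, LinearMap.zero_apply,
      hB, smul_eq_mul] at e22 e02 e12 e32
    norm_num [Fin.ext_iff] at e22 e02 e12 e32
    have ha3 : a 3 = 0 := by linarith
    have ha1 : a 1 = 0 := by linarith
    have ha0 : a 0 = 0 := by linarith
    norm_num [show ((3:Fin 4):ℕ) = 3 from rfl] at e32
    have ha2 : a 2 = 0 := by linarith
    rw [hsum, ha0, ha1, ha2, ha3]
    simp
  · intro h x y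
    rw [h]
    simp
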